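/- Let SP and SP' be specifications over Σ and Σ' respectively, σ : Σ → Σ' an injective signature morphism, and τ the translation induced by σ (τ(t ≈ t') = { σ(t) ≈ σ(t') }). If SP ⇝_σ SP', then SP ⇀_τ SP'. -/

import Mathlib

open FirstOrder

/-- A single-sorted algebraic signature, i.e. a first-order language
(used with no relation symbols). -/
abbrev Signature : Type 1 := FirstOrder.Language.{0,0}

/-- An equation over a signature `L`: a pair of terms with variables in `ℕ`. -/
abbrev Eqn (L : Signature) : Type := L.Term ℕ × L.Term ℕ

/-- A conditional equation: a finite set of premise equations and a conclusion equation. -/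
abbrev CondEqn (L : Signature) : Type := Finset (Eqn L) × Eqn L

/-- An algebra for the signature `L`: a structure with nonempty carrier
(in a fixed universe). -/
structure Alg (L : Signature) : Type 1 where
  carrier : Type
  [str : L.Structure carrier]
  [nonempty : Nonempty carrier]

attribute [instance] Alg.str Alg.nonempty

/-- An assignment satisfies an equation. -/
def Alg.SatEq {L : Signature} (A : Alg L) (h : ℕ → A.carrier) (e : Eqn L) : Prop :=
  e.1.realize h = e.2.realize h

/-- An algebra satisfies a conditional equation. -/
def Alg.Sat {L : Signature} (A : Alg L) (ξ : CondEqn L) : Prop :=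
  ∀ h : ℕ → A.carrier, (∀ e ∈ ξ.1, A.SatEq h e) → A.SatEq h ξ.2

/-- A class of algebras satisfies a conditional equation. -/
def ClassSat {L : Signature} (K : Set (Alg L)) (ξ : CondEqn L) : Prop :=
  ∀ A ∈ K, A.Sat ξ

/-- The class of algebras denoted by a flat specification with axioms `Φ`. -/
def FlatMod {L : Signature} (Φ : Set (CondEqn L)) : Set (Alg L) :=
  {A | ∀ ξ ∈ Φ, A.Sat ξ}

/-- Extension of a translation on equations to conditional equations:
`τ⟨Γ, e⟩ = { ⟨⋃_{e₀ ∈ Γ} τ(e₀), e'⟩ : e' ∈ τ(e) }`. -/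
noncomputable def trCE {L L' : Signature} (τ : Eqn L → Finset (Eqn L'))
    (ξ : CondEqn L) : Finset (CondEqn L') :=
  letI := Classical.decEq (Eqn L')
  letI := Classical.decEq (CondEqn L')
  (τ ξ.2).image (fun e' => (ξ.1.biUnion τ, e'))

/-- `τ` interprets the specification (with model class `SP`) in the class `K`. -/
def InterpretsIn {L L' : Signature} (τ : Eqn L → Finset (Eqn L'))
    (SP : Set (Alg L)) (K : Set (Alg L')) : Prop :=
  ∀ ξ : CondEqn L, ClassSat SP ξ ↔ ∀ η ∈ trCE τ ξ, ClassSat K η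

/-- `τ` interprets the specification with model class `SP`. -/
def Interprets {L L' : Signature} (τ : Eqn L → Finset (Eqn L'))
    (SP : Set (Alg L)) : Prop :=
  ∃ K : Set (Alg L'), InterpretsIn τ SP K

/-- A `τ`-model of the specification with model class `SP`. -/
def IsTauModel {L L' : Signature} (τ : Eqn L → Finset (Eqn L'))
    (SP : Set (Alg L)) (A' : Alg L') : Prop :=
  ∀ ξ : CondEqn L, ClassSat SP ξ → ∀ η ∈ trCE τ ξ, A'.Sat η

/-- The class of all `τ`-models of `SP`. -/
def ModTau {L L' : Signature} (τ : Eqn L → Finset (Eqn L'))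
    (SP : Set (Alg L)) : Set (Alg L') :=
  {A' | IsTauModel τ SP A'}

/-- `SP'` refines `SP` by the interpretation `τ`. -/
def Refines {L L' : Signature} (τ : Eqn L → Finset (Eqn L'))
    (SP : Set (Alg L)) (SP' : Set (Alg L')) : Prop :=
  ∀ ξ : CondEqn L, ClassSat SP ξ → ∀ η ∈ trCE τ ξ, ClassSat SP' η

/-- Application of a substitution to an equation. -/
def substEq {L : Signature} (σ : ℕ → L.Term ℕ) (e : Eqn L) : Eqn L :=
  (e.1.subst σ, e.2.subst σ)

/-- The extension of a signature morphism (with variable map `v`) to terms. -/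
def mapTerm {L L' : Signature} (σ : L →ᴸ L') (v : ℕ → ℕ) : L.Term ℕ → L'.Term ℕ
  | .var x => .var (v x)
  | .func f ts => .func (σ.onFunction f) (fun i => mapTerm σ v (ts i))

/-- The extension of a signature morphism to equations. -/
def mapEq {L L' : Signature} (σ : L →ᴸ L') (v : ℕ → ℕ) (e : Eqn L) : Eqn L' :=
  (mapTerm σ v e.1, mapTerm σ v e.2)

/-- The extension of a signature morphism to conditional equations. -/
noncomputable def mapCE {L L' : Signature} (σ : L →ᴸ L') (v : ℕ → ℕ)
    (ξ : CondEqn L) : CondEqn L' :=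
  letI := Classical.decEq (Eqn L')
  (ξ.1.image (mapEq σ v), mapEq σ v ξ.2)

/-- The σ-reduct of an algebra along a signature morphism. -/
def Alg.reduct {L L' : Signature} (σ : L →ᴸ L') (A' : Alg L') : Alg L :=
  { carrier := A'.carrier, str := σ.reduct A'.carrier, nonempty := A'.nonempty }

/-- The composite of two translations on equations: `(ρ∘τ)(e) = ⋃_{e' ∈ τ(e)} ρ(e')`. -/
noncomputable def trCompEq {L L' L'' : Signature} (τ : Eqn L → Finset (Eqn L'))
    (ρ : Eqn L' → Finset (Eqn L'')) (e : Eqn L) : Finset (Eqn L'') :=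
  letI := Classical.decEq (Eqn L'')
  (τ e).biUnion ρ

/-- Expansion of an `L`-algebra to an `L'`-structure along `σ`: symbols in the
image of `σ` are interpreted as before, all others are interpreted trivially. -/
noncomputable def extStr {L L' : Signature} (σ : L →ᴸ L') (A : Alg L) :
    L'.Structure A.carrier where
  funMap {n} g xs :=
    letI := Classical.propDecidable (∃ f : L.Functions n, σ.onFunction f = g)
    if h : ∃ f : L.Functions n, σ.onFunction f = g then
      Language.Structure.funMap h.choose xs
    else Classical.choice A.nonempty
  RelMap _ _ := True

/-- Expansion of an `L`-algebra to an `L'`-algebra along `σ`. -/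
noncomputable def extAlg {L L' : Signature} (σ : L →ᴸ L') (A : Alg L) : Alg L' :=
  { carrier := A.carrier, str := extStr σ A, nonempty := A.nonempty }

theorem realize_mapTerm_reduct {L L' : Signature} (σ : L →ᴸ L') (v : ℕ → ℕ)
    (A' : Alg L') (h' : ℕ → A'.carrier) (t : L.Term ℕ) :
    (mapTerm σ v t).realize h' =
      Language.Term.realize (M := (Alg.reduct σ A').carrier) (h' ∘ v) t := by
  induction t with
  | var x => rfl
  | func f ts ih =>
    show Language.Structure.funMap (σ.onFunction f) _
        = Language.Structure.funMap (σ.onFunction f) _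
    congr 1
    funext i
    exact ih i

theorem satEq_mapEq_reduct {L L' : Signature} (σ : L →ᴸ L') (v : ℕ → ℕ)
    (A' : Alg L') (h' : ℕ → A'.carrier) (e : Eqn L) :
    A'.SatEq h' (mapEq σ v e) ↔ (Alg.reduct σ A').SatEq (h' ∘ v) e := by
  unfold Alg.SatEq mapEq
  rw [realize_mapTerm_reduct, realize_mapTerm_reduct]
  exact Iff.rfl

theorem realize_mapTerm_ext {L L' : Signature} (σ : L →ᴸ L')
    (hinj : ∀ n, Function.Injective fun f : L.Functions n => σ.onFunction f)
    (v : ℕ → ℕ) (A : Alg L) (h' : ℕ → A.carrier) (t : L.Term ℕ) :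
    Language.Term.realize (M := (extAlg σ A).carrier) h' (mapTerm σ v t) =
      Language.Term.realize (M := A.carrier) (h' ∘ v) t := by
  induction t with
  | var x => rfl
  | func f ts ih =>
    have hc : ∃ f' : L.Functions _, σ.onFunction f' = σ.onFunction f := ⟨f, rfl⟩
    show (letI := Classical.propDecidable (∃ f' : L.Functions _,
          σ.onFunction f' = σ.onFunction f);
        if h : ∃ f' : L.Functions _, σ.onFunction f' = σ.onFunction f then
          Language.Structure.funMap (M := A.carrier) h.choose
            (fun i => Language.Term.realize (M := (extAlg σ A).carrier) h'
              (mapTerm σ v (ts i)))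
        else Classical.choice A.nonempty)
      = _
    rw [dif_pos hc]
    have hch : hc.choose = f := hinj _ hc.choose_spec
    rw [hch]
    congr 1
    funext i
    exact ih i

theorem satEq_mapEq_ext {L L' : Signature} (σ : L →ᴸ L')
    (hinj : ∀ n, Function.Injective fun f : L.Functions n => σ.onFunction f)
    (v : ℕ → ℕ) (A : Alg L) (h' : ℕ → A.carrier) (e : Eqn L) :
    (extAlg σ A).SatEq h' (mapEq σ v e) ↔ A.SatEq (h' ∘ v) e := by
  unfold Alg.SatEq mapEq
  rw [realize_mapTerm_ext σ hinj, realize_mapTerm_ext σ hinj]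
  exact Iff.rfl

theorem mem_trCE_singleton {L L' : Signature} (σ : L →ᴸ L') (v : ℕ → ℕ)
    (ξ : CondEqn L) {η : CondEqn L'} :
    letI := Classical.decEq (Eqn L')
    η ∈ trCE (fun e => ({mapEq σ v e} : Finset (Eqn L'))) ξ ↔
      η = (ξ.1.biUnion (fun e => ({mapEq σ v e} : Finset (Eqn L'))), mapEq σ v ξ.2) := by
  unfold trCE
  simp [eq_comm]

theorem tauModel_of_reduct_mem {L L' : Signature} (σ : L →ᴸ L') (v : ℕ → ℕ)
    (SP : Set (Alg L)) (A' : Alg L') (hA : Alg.reduct σ A' ∈ SP) :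
    IsTauModel (fun e => ({mapEq σ v e} : Finset (Eqn L'))) SP A' := by
  letI := Classical.decEq (Eqn L')
  intro ξ hξ η hη
  replace hη := (mem_trCE_singleton σ v ξ).1 hη
  subst hη
  intro h' hprem
  rw [satEq_mapEq_reduct]
  apply hξ _ hA
  intro e he
  rw [← satEq_mapEq_reduct]
  apply hprem
  exact Finset.mem_biUnion.2 ⟨e, he, Finset.mem_singleton_self _⟩

theorem extAlg_isTauModel {L L' : Signature} (σ : L →ᴸ L')
    (hinj : ∀ n, Function.Injective fun f : L.Functions n => σ.onFunction f)
    (v : ℕ → ℕ) (SP : Set (Alg L)) (A : Alg L) (hA : A ∈ SP) :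
    IsTauModel (fun e => ({mapEq σ v e} : Finset (Eqn L'))) SP (extAlg σ A) := by
  letI := Classical.decEq (Eqn L')
  intro ξ hξ η hη
  replace hη := (mem_trCE_singleton σ v ξ).1 hη
  subst hη
  intro h' hprem
  apply (satEq_mapEq_ext σ hinj v A h' ξ.2).2
  apply hξ _ hA
  intro e he
  apply (satEq_mapEq_ext σ hinj v A h' e).1
  apply hprem
  exact Finset.mem_biUnion.2 ⟨e, he, Finset.mem_singleton_self _⟩

/-- for an injective signature morphism `σ` with induced translation `τ`,
`SP ⇝_σ SP'` implies `SP ⇀_τ SP'` (in particular `τ` interprets `SP`). -/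
theorem sigma_refinement_implies_refinement_by_interpretation {L L' : Signature}
    (_hL : L.IsAlgebraic) (_hL' : L'.IsAlgebraic)
    (σ : L →ᴸ L') (v : ℕ → ℕ) (hv : Function.Injective v)
    (hinj : ∀ n, Function.Injective fun f : L.Functions n => σ.onFunction f)
    (SP : Set (Alg L)) (SP' : Set (Alg L'))
    (href : ∀ A' ∈ SP', Alg.reduct σ A' ∈ SP) :
    Interprets (fun e => ({mapEq σ v e} : Finset (Eqn L'))) SP ∧
      Refines (fun e => ({mapEq σ v e} : Finset (Eqn L'))) SP SP' := by
  letI := Classical.decEq (Eqn L')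
  set τ : Eqn L → Finset (Eqn L') := fun e => ({mapEq σ v e} : Finset (Eqn L'))
  have hRef : Refines τ SP SP' := by
    intro ξ hξ η hη A' hA'
    exact tauModel_of_reduct_mem σ v SP A' (href A' hA') ξ hξ η hη
  refine ⟨⟨ModTau τ SP, ?_⟩, hRef⟩
  intro ξ
  constructor
  · intro hξ η hη A' hA'
    exact hA' ξ hξ η hη
  · intro H A hA h hprem
    have hmem : extAlg σ A ∈ ModTau τ SP := extAlg_isTauModel σ hinj v SP A hA
    have hηmem : (ξ.1.biUnion τ, mapEq σ v ξ.2) ∈ trCE τ ξ :=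
      (mem_trCE_singleton σ v ξ).2 rfl
    have hsat := H _ hηmem _ hmem
    have hgv : ∀ n, Function.invFun v (v n) = n :=
      fun n => Function.leftInverse_invFun hv n
    have hcomp : (h ∘ Function.invFun v) ∘ v = h := by
      funext n
      simp [Function.comp, hgv n]
    have := hsat (h ∘ Function.invFun v) ?_
    · have h3 : A.SatEq ((h ∘ Function.invFun v) ∘ v) ξ.2 :=
        (satEq_mapEq_ext σ hinj v A (h ∘ Function.invFun v) ξ.2).1 this
      rw [hcomp] at h3
      exact h3
    · intro e' he'
      classical
      obtain ⟨e, he, he'eq⟩ := Finset.mem_biUnion.1 he'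
      rw [Finset.mem_singleton] at he'eq
      subst he'eq
      have h4 : A.SatEq ((h ∘ Function.invFun v) ∘ v) e := by
        rw [hcomp]
        exact hprem e he
      exact (satEq_mapEq_ext σ hinj v A (h ∘ Function.invFun v) e).2 h4
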